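/- Let X be a Polish space, J : X → [0,∞] a lower semicontinuous function, and Q a Borel probability measure on X. Then the supremum over all bounded continuous functions f on X of (∫ f dQ − sup_{x∈X} (f(x) − J(x))) equals ∫ J dQ. -/

import Mathlib

open MeasureTheory
open scoped ENNReal BoundedContinuousFunction

namespace Res25aAux

variable {X : Type*} [MetricSpace X]

/-- Moreau–Yosida type regularization of `J`, truncated at level `n`. -/
noncomputable def yos (J : X → ℝ≥0∞) (n : ℕ) (x : X) : ℝ :=
  ⨅ y : X, ((min (J y) n).toReal + n * dist x y)

variable {J : X → ℝ≥0∞} {n m : ℕ} {x : X}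

lemma term_nonneg (y : X) : 0 ≤ (min (J y) (n : ℝ≥0∞)).toReal + n * dist x y := by
  positivity

lemma bddBelow_term :
    BddBelow (Set.range fun y : X => (min (J y) (n : ℝ≥0∞)).toReal + n * dist x y) :=
  ⟨0, by rintro _ ⟨y, rfl⟩; exact term_nonneg y⟩

lemma yos_nonneg [Nonempty X] : 0 ≤ yos J n x := le_ciInf fun y => term_nonneg y

lemma min_ne_top (y : X) : min (J y) (n : ℝ≥0∞) ≠ ⊤ :=
  ne_top_of_le_ne_top (ENNReal.natCast_ne_top n) (min_le_right _ _)

lemma yos_le [Nonempty X] : yos J n x ≤ (min (J x) n).toReal := by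
  have h := ciInf_le (bddBelow_term (J := J) (n := n) (x := x)) x
  simpa [yos] using h

lemma yos_le_nat [Nonempty X] : yos J n x ≤ n := by
  refine yos_le.trans ?_
  have : (min (J x) (n : ℝ≥0∞)).toReal ≤ ((n : ℝ≥0∞)).toReal :=
    ENNReal.toReal_mono (ENNReal.natCast_ne_top n) (min_le_right _ _)
  simpa using this

lemma yos_lip [Nonempty X] (x x' : X) : yos J n x ≤ yos J n x' + n * dist x x' := by
  rw [← sub_le_iff_le_add]
  refine le_ciInf fun y => ?_
  rw [sub_le_iff_le_add]
  calc yos J n x ≤ (min (J y) n).toReal + n * dist x y := ciInf_le bddBelow_term y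
    _ ≤ (min (J y) n).toReal + n * (dist x x' + dist x' y) := by
        have := dist_triangle x x' y
        nlinarith [Nat.cast_nonneg (α := ℝ) n]
    _ = (min (J y) n).toReal + n * dist x' y + n * dist x x' := by ring

lemma yos_lipschitz [Nonempty X] : LipschitzWith n (yos J n) := by
  refine LipschitzWith.of_dist_le_mul fun x x' => ?_
  rw [Real.dist_eq, abs_sub_le_iff]
  have h1 := yos_lip (J := J) (n := n) x x'
  have h2 := yos_lip (J := J) (n := n) x' x
  rw [dist_comm x' x] at h2
  constructor <;> [skip; skip] <;> simp only [NNReal.coe_natCast] <;> linarith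

lemma yos_mono [Nonempty X] (h : n ≤ m) : yos J n x ≤ yos J m x := by
  refine le_ciInf fun y => (ciInf_le bddBelow_term y).trans ?_
  gcongr
  all_goals first
    | exact min_ne_top y
    | exact_mod_cast h

lemma yos_sup [Nonempty X] (hJ : LowerSemicontinuous J) (x : X) :
    ⨆ n : ℕ, ENNReal.ofReal (yos J n x) = J x := by
  refine le_antisymm (iSup_le fun n => ?_) ?_
  · calc ENNReal.ofReal (yos J n x) ≤ ENNReal.ofReal ((min (J x) n).toReal) :=
        ENNReal.ofReal_le_ofReal yos_le
      _ = min (J x) n := ENNReal.ofReal_toReal (min_ne_top x)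
      _ ≤ J x := min_le_left _ _
  · refine ENNReal.le_of_forall_nnreal_lt fun r hr => ?_
    obtain ⟨δ, δpos, hδ⟩ := Metric.eventually_nhds_iff.mp (hJ x _ hr)
    obtain ⟨n, hn⟩ := exists_nat_ge (max (r : ℝ) ((r : ℝ) / δ))
    have hn1 : (r : ℝ) ≤ n := (le_max_left _ _).trans hn
    have hn2 : (r : ℝ) ≤ n * δ := by
      have := (le_max_right ((r : ℝ)) ((r : ℝ) / δ)).trans hn
      calc (r : ℝ) = (r : ℝ) / δ * δ := by field_simp
        _ ≤ n * δ := by gcongr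
    refine le_iSup_of_le n ?_
    rw [show ((r : ℝ≥0∞)) = ENNReal.ofReal (r : ℝ) by
      simp [ENNReal.ofReal_coe_nnreal]]
    refine ENNReal.ofReal_le_ofReal (le_ciInf fun y => ?_)
    rcases lt_or_ge (dist y x) δ with h | h
    · have hle : (r : ℝ≥0∞) ≤ min (J y) n := by
        refine le_min (hδ h).le ?_
        exact_mod_cast hn1
      have h2 : (r : ℝ) ≤ (min (J y) n).toReal := by
        have := ENNReal.toReal_mono (min_ne_top y) hle
        simpa using this
      have h3 : (0 : ℝ) ≤ n * dist x y := by positivity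
      linarith
    · have h4 : (r : ℝ) ≤ n * dist x y := by
        rw [dist_comm]
        calc (r : ℝ) ≤ n * δ := hn2
          _ ≤ n * dist y x := by gcongr
      have h5 : (0 : ℝ) ≤ (min (J y) n).toReal := ENNReal.toReal_nonneg
      linarith

/-- The regularization as a bounded continuous function. -/
noncomputable def F (J : X → ℝ≥0∞) (n : ℕ) [Nonempty X] : X →ᵇ ℝ :=
  ⟨⟨yos J n, yos_lipschitz.continuous⟩, n, fun x y => by
    rw [Real.dist_eq, abs_sub_le_iff]
    have h1 : (0 : ℝ) ≤ yos J n x := yos_nonneg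
    have h2 : (0 : ℝ) ≤ yos J n y := yos_nonneg
    have h3 : yos J n x ≤ n := yos_le_nat
    have h4 : yos J n y ≤ n := yos_le_nat
    constructor <;> linarith⟩

lemma ennreal_coe_ereal_eq {x : ℝ≥0∞} (hx : x ≠ ⊤) :
    ((x.toReal : ℝ) : EReal) = (x : EReal) := by
  rw [show (x.toReal : ℝ) = (x : EReal).toReal from (EReal.toReal_coe_ennreal).symm]
  exact EReal.coe_toReal (by simpa [EReal.coe_ennreal_eq_top_iff] using hx)
    (EReal.coe_ennreal_ne_bot _)

end Res25aAux

open Res25aAux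

/-- Lemma `res-25a`: for a Polish space `X`, a lower semicontinuous `J : X → [0,∞]`
and a Borel probability measure `Q`,
`sup_{f ∈ C_b(X)} ( ∫ f dQ − sup_x (f x − J x) ) = ∫ J dQ`. -/
theorem stmt0 {X : Type*} [MetricSpace X] [CompleteSpace X]
    [TopologicalSpace.SeparableSpace X] [MeasurableSpace X] [BorelSpace X]
    (J : X → ℝ≥0∞) (hJ : LowerSemicontinuous J)
    (Q : Measure X) [IsProbabilityMeasure Q] :
    (⨆ f : X →ᵇ ℝ,
        (((∫ x, f x ∂Q : ℝ) : EReal) - ⨆ x : X, ((f x : EReal) - (J x : EReal))))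
      = ((∫⁻ x, J x ∂Q : ℝ≥0∞) : EReal) := by
  haveI hne : Nonempty X := by
    by_contra h
    rw [not_nonempty_iff] at h
    have h1 : Q Set.univ = 1 := measure_univ
    rw [Set.univ_eq_empty_iff.mpr h, measure_empty] at h1
    exact zero_ne_one h1
  refine le_antisymm (iSup_le fun f => ?_) ?_
  · -- upper bound
    by_cases htop : (∫⁻ x, J x ∂Q) = ⊤
    · rw [htop]; exact le_top
    set S : EReal := ⨆ x : X, ((f x : EReal) - (J x : EReal)) with hSdef
    -- there is a point where J is finite
    obtain ⟨x₀, hx₀⟩ : ∃ x, J x ≠ ⊤ := by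
      by_contra hc
      push_neg at hc
      have : (∫⁻ x, J x ∂Q) = ⊤ := by
        rw [show J = fun _ => (⊤ : ℝ≥0∞) from funext hc]
        simp [lintegral_const, measure_univ]
      exact htop this
    have hSbot : ((f x₀ - (J x₀).toReal : ℝ) : EReal) ≤ S := by
      have h := le_iSup (fun x : X => ((f x : EReal) - (J x : EReal))) x₀
      rw [← ennreal_coe_ereal_eq hx₀, ← EReal.coe_sub] at h
      exact h
    have hSnebot : S ≠ ⊥ := fun hS => by
      rw [hS] at hSbot
      exact (EReal.coe_ne_bot _) (le_bot_iff.mp hSbot)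
    have hSnetop : S ≠ ⊤ := by
      refine ne_top_of_le_ne_top (EReal.coe_ne_top ‖f‖) (iSup_le fun x => ?_)
      calc (f x : EReal) - (J x : EReal) ≤ (f x : EReal) - 0 :=
          EReal.sub_le_sub le_rfl (EReal.coe_ennreal_nonneg _)
        _ = (f x : EReal) := by rw [sub_zero]
        _ ≤ (‖f‖ : EReal) := by
            exact_mod_cast (le_abs_self _).trans (f.norm_coe_le_norm x)
    set s : ℝ := S.toReal with hs
    have hS : S = (s : EReal) := (EReal.coe_toReal hSnetop hSnebot).symm
    -- pointwise bound
    have hpt : ∀ x, ENNReal.ofReal (f x - s) ≤ J x := by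
      intro x
      by_cases hx : J x = ⊤
      · rw [hx]; exact le_top
      · have h1 : (f x : EReal) - (J x : EReal) ≤ (s : EReal) := by
          rw [← hS]
          exact le_iSup (fun x : X => ((f x : EReal) - (J x : EReal))) x
        rw [← ennreal_coe_ereal_eq hx, ← EReal.coe_sub, EReal.coe_le_coe_iff] at h1
        calc ENNReal.ofReal (f x - s) ≤ ENNReal.ofReal ((J x).toReal) :=
            ENNReal.ofReal_le_ofReal (by linarith)
          _ = J x := ENNReal.ofReal_toReal hx
    have hfint : Integrable (fun x => f x) Q := f.integrable Q
    have hgint : Integrable (fun x => f x - s) Q := hfint.sub (integrable_const s)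
    have hkey : (∫ x, f x ∂Q) - s ≤ (∫⁻ x, J x ∂Q).toReal := by
      have h1 : (∫ x, (f x - s) ∂Q) = (∫ x, f x ∂Q) - s := by
        rw [integral_sub hfint (integrable_const s)]
        simp [measure_univ]
      have h2 : (∫ x, (f x - s) ∂Q)
          ≤ (∫⁻ x, ENNReal.ofReal (f x - s) ∂Q).toReal := by
        rw [integral_eq_lintegral_pos_part_sub_lintegral_neg_part hgint]
        exact sub_le_self _ ENNReal.toReal_nonneg
      have h3 : (∫⁻ x, ENNReal.ofReal (f x - s) ∂Q).toReal
          ≤ (∫⁻ x, J x ∂Q).toReal :=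
        ENNReal.toReal_mono htop (lintegral_mono hpt)
      linarith
    calc ((∫ x, f x ∂Q : ℝ) : EReal) - S = ((((∫ x, f x ∂Q) - s : ℝ)) : EReal) := by
          rw [hS, ← EReal.coe_sub]
      _ ≤ (((∫⁻ x, J x ∂Q).toReal : ℝ) : EReal) := EReal.coe_le_coe_iff.mpr hkey
      _ = ((∫⁻ x, J x ∂Q : ℝ≥0∞) : EReal) := ennreal_coe_ereal_eq htop
  · -- lower bound
    have hmeas : ∀ n : ℕ, Measurable fun x => ENNReal.ofReal (F J n x) := fun n =>
      ((F J n).continuous.measurable).ennreal_ofReal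
    have hmono : Monotone fun (n : ℕ) (x : X) => ENNReal.ofReal (F J n x) :=
      fun n m h x => ENNReal.ofReal_le_ofReal (yos_mono h)
    have h1 : (∫⁻ x, J x ∂Q) = ⨆ n : ℕ, ∫⁻ x, ENNReal.ofReal (F J n x) ∂Q := by
      rw [← lintegral_iSup hmeas hmono]
      exact lintegral_congr fun x => (yos_sup hJ x).symm
    have h2 : ((∫⁻ x, J x ∂Q : ℝ≥0∞) : EReal)
        = ⨆ n : ℕ, ((∫⁻ x, ENNReal.ofReal (F J n x) ∂Q : ℝ≥0∞) : EReal) := by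
      rw [h1]
      exact Monotone.map_ciSup_of_continuousAt
        (continuous_coe_ennreal_ereal.continuousAt)
        (fun a b hab => EReal.coe_ennreal_le_coe_ennreal_iff.mpr hab)
        (OrderTop.bddAbove _)
    rw [h2]
    refine iSup_le fun n => le_iSup_of_le (F J n) ?_
    -- finiteness of the approximating lintegral
    have hfin : (∫⁻ x, ENNReal.ofReal (F J n x) ∂Q) ≠ ⊤ := by
      have hle : (∫⁻ x, ENNReal.ofReal (F J n x) ∂Q) ≤ ENNReal.ofReal n := by
        calc (∫⁻ x, ENNReal.ofReal (F J n x) ∂Q)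
            ≤ ∫⁻ _, ENNReal.ofReal (n : ℝ) ∂Q :=
            lintegral_mono fun x => ENNReal.ofReal_le_ofReal yos_le_nat
          _ = ENNReal.ofReal (n : ℝ) := by simp [lintegral_const, measure_univ]
      exact ne_top_of_le_ne_top ENNReal.ofReal_ne_top hle
    have hint : (∫ x, F J n x ∂Q) = (∫⁻ x, ENNReal.ofReal (F J n x) ∂Q).toReal :=
      integral_eq_lintegral_of_nonneg_ae
        (Filter.Eventually.of_forall fun x => yos_nonneg)
        ((F J n).continuous.aestronglyMeasurable)
    have hSn : (⨆ x : X, ((F J n x : EReal) - (J x : EReal))) ≤ 0 := by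
      refine iSup_le fun x => ?_
      by_cases hx : J x = ⊤
      · rw [hx, EReal.coe_ennreal_top, EReal.sub_top]
        exact bot_le
      · rw [← ennreal_coe_ereal_eq hx, ← EReal.coe_sub]
        refine EReal.coe_nonpos.mpr (sub_nonpos.mpr ?_)
        exact yos_le.trans (ENNReal.toReal_mono hx (min_le_left _ _))
    calc ((∫⁻ x, ENNReal.ofReal (F J n x) ∂Q : ℝ≥0∞) : EReal)
        = ((∫ x, F J n x ∂Q : ℝ) : EReal) := by rw [hint, ennreal_coe_ereal_eq hfin]
      _ = ((∫ x, F J n x ∂Q : ℝ) : EReal) - 0 := by rw [sub_zero]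
      _ ≤ ((∫ x, F J n x ∂Q : ℝ) : EReal) - ⨆ x : X, ((F J n x : EReal) - (J x : EReal)) :=
          EReal.sub_le_sub le_rfl hSn
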